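/- The generalized ZH-monoid acts on standard basis vectors by Hamming weight: for every n ≥ 1 and every bitstring x : Fin n → Fin 2, Mₙ applied to the basis vector e_x equals |0⟩ if x is identically 0, equals |1⟩ if x has exactly one coordinate equal to 1, and equals 0 otherwise. -/

import Mathlib

open Kronecker Matrix

/-- The ZH-monoid `M`, determined on the standard basis by
`M|00⟩ = |0⟩`, `M|01⟩ = |1⟩`, `M|10⟩ = |1⟩`, `M|11⟩ = 0`. -/
def ZHmonoid : Matrix (Fin 2) (Fin 2 × Fin 2) ℂ :=
  Matrix.of fun i p =>
    if p = (0, 0) then ![1, 0] i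
    else if p = (1, 1) then 0
    else ![0, 1] i

/-- The generalized ZH-monoid `Mₙ`, defined inductively by `M₁ = I₂` and
`M_{n+1} = M * (I₂ ⊗ₖ Mₙ)`, using the canonical identification of
`Fin 2 × (Fin n → Fin 2)` with `Fin (n+1) → Fin 2`. -/
noncomputable def genMonoid : (n : ℕ) → Matrix (Fin 2) (Fin n → Fin 2) ℂ
  | 0 => Matrix.of fun i _ => if i = 0 then 1 else 0
  | 1 => Matrix.reindex (Equiv.refl (Fin 2)) (Equiv.funUnique (Fin 1) (Fin 2)).symm 1
  | (n + 2) =>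
    Matrix.reindex (Equiv.refl (Fin 2)) (Fin.consEquiv fun _ => Fin 2)
      (ZHmonoid * ((1 : Matrix (Fin 2) (Fin 2) ℂ) ⊗ₖ genMonoid (n + 1)))
  termination_by n => n

lemma cons_all_zero {n : ℕ} (a : Fin 2) (t : Fin n → Fin 2) :
    (∀ j, (Fin.cons a t : Fin (n+1) → Fin 2) j = 0) ↔ a = 0 ∧ ∀ j, t j = 0 := by
  rw [Fin.forall_fin_succ]
  simp

lemma cons_zero_eu {n : ℕ} (t : Fin n → Fin 2) :
    (∃! j, (Fin.cons 0 t : Fin (n+1) → Fin 2) j = 1) ↔ ∃! j, t j = 1 := by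
  constructor
  · rintro ⟨j, hj, hu⟩
    refine Fin.cases ?_ (fun k hk hu => ?_) j hj hu
    · intro h; simp at h
    · refine ⟨k, by simpa using hk, fun y hy => ?_⟩
      have := hu y.succ (by simpa using hy)
      exact Fin.succ_injective _ this
  · rintro ⟨j, hj, hu⟩
    refine ⟨j.succ, by simpa using hj, fun y hy => ?_⟩
    refine Fin.cases ?_ (fun k hk => ?_) y hy
    · intro h; simp at h
    · exact congrArg Fin.succ (hu k (by simpa using hk))

lemma cons_one_eu {n : ℕ} (t : Fin n → Fin 2) :
    (∃! j, (Fin.cons 1 t : Fin (n+1) → Fin 2) j = 1) ↔ ∀ j, t j = 0 := by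
  constructor
  · rintro ⟨j, hj, hu⟩ k
    have h0 : j = 0 := (hu 0 (by simp)).symm ▸ rfl
    by_contra hk
    have hk1 : t k = 1 := by omega
    have := hu k.succ (by simpa using hk1)
    subst h0
    exact (Fin.succ_ne_zero k) this
  · intro h
    refine ⟨0, by simp, fun y hy => ?_⟩
    refine Fin.cases (fun _ => rfl) (fun k hk => ?_) y hy
    simp only [Fin.cons_succ] at hk
    have := h k
    omega

open Classical in
lemma genMonoid_col : ∀ n (x : Fin (n+1) → Fin 2) (i : Fin 2),
    genMonoid (n+1) i x =
      if ∀ j, x j = 0 then ![1, 0] i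
      else if ∃! j, x j = 1 then ![0, 1] i else 0 := by
  intro n
  induction n with
  | zero =>
    intro x i
    rw [genMonoid]
    simp only [Matrix.reindex_apply, Matrix.submatrix_apply, Equiv.refl_symm,
      Equiv.refl_apply, Equiv.symm_symm, Equiv.funUnique_apply, Matrix.one_apply]
    have hx : (∀ j, x j = 0) ↔ x 0 = 0 := by
      constructor
      · intro h; exact h 0
      · intro h j; rwa [Fin.eq_zero j]
    have hx1 : (∃! j, x j = 1) ↔ x 0 = 1 := by
      constructor
      · rintro ⟨j, hj, _⟩; rwa [Fin.eq_zero j] at hj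
      · intro h; exact ⟨0, h, fun y _ => Fin.eq_zero y⟩
    rcases (by omega : x 0 = 0 ∨ x 0 = 1) with h | h <;>
      rcases (by omega : i = 0 ∨ i = 1) with hi | hi <;>
      simp [hx, hx1, h, hi, Fin.exists_fin_one]
  | succ n ih =>
    intro x i
    induction x using Fin.consCases with
    | cons a t =>
    have hcons : (Fin.consEquiv fun _ : Fin (n+2) => Fin 2).symm (Fin.cons a t) = (a, t) := by
      apply (Fin.consEquiv fun _ : Fin (n+2) => Fin 2).injective
      simp [Fin.consEquiv]
    simp only [genMonoid, Matrix.reindex_apply, Matrix.submatrix_apply, Equiv.refl_symm,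
      Equiv.refl_apply, hcons, Matrix.mul_apply, Fintype.sum_prod_type, Fin.sum_univ_two,
      Matrix.kroneckerMap_apply, Matrix.one_apply]
    rw [ih t 0, ih t 1]
    simp only [cons_all_zero]
    rcases (by omega : a = 0 ∨ a = 1) with ha | ha <;> subst ha
    · simp only [cons_zero_eu]
      rcases (by omega : i = 0 ∨ i = 1) with hi | hi <;> subst hi <;>
        by_cases h0 : ∀ j, t j = 0 <;> by_cases h1 : ∃! j, t j = 1 <;>
        simp [ZHmonoid, h0, h1]
    · simp only [cons_one_eu]
      rcases (by omega : i = 0 ∨ i = 1) with hi | hi <;> subst hi <;>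
        by_cases h0 : ∀ j, t j = 0 <;> by_cases h1 : ∃! j, t j = 1 <;>
        simp [ZHmonoid, h0, h1]


open Classical in
/-- The generalized ZH-monoid acts on standard basis vectors by Hamming weight:
for every `n ≥ 1` and bitstring `x : Fin n → Fin 2`, `Mₙ e_x` equals `|0⟩` if `x` is
identically `0`, equals `|1⟩` if `x` has exactly one coordinate equal to `1`, and
equals `0` otherwise. -/
theorem genMonoid_apply_basis (n : ℕ) (hn : 1 ≤ n) (x : Fin n → Fin 2) :
    (genMonoid n).mulVec (fun y => if y = x then 1 else 0) =
      if ∀ i, x i = 0 then ![1, 0]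
      else if ∃! i, x i = 1 then ![0, 1]
      else 0 := by
  obtain ⟨m, rfl⟩ : ∃ m, n = m + 1 := ⟨n - 1, by omega⟩
  funext i
  have : (genMonoid (m + 1)).mulVec (fun y => if y = x then 1 else 0) i
      = genMonoid (m + 1) i x := by
    simp [Matrix.mulVec, dotProduct, Finset.sum_ite_eq']
  rw [this, genMonoid_col]
  split
  · rfl
  split <;> rfl
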